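/- Let (a, x₁, x₂, x₃) ∈ ℂ⁴ and set β = 1 − |x₁|² − |x₂|² + |x₃|² and δ = |x₁x₂ − x₃|. Then (a, x₁, x₂, x₃) ∈ ℍ_N if and only if (x₁, x₂, x₃) ∈ 𝔼 and one of the following holds: (i) a = 0 and x₃ = x₁x₂; (ii) a ≠ 0 and β − √(β² − 4δ²) < 2|a|² < β + √(β² − 4δ²). (For (x₁,x₂,x₃) ∈ 𝔼 one has β² − 4δ² > 0.) -/

import Mathlib

noncomputable section

open Complex

/-- The expression `1 - x₁ z₁ - x₂ z₂ + x₃ z₁ z₂`. -/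
def hexDen (x : ℂ × ℂ × ℂ) (z₁ z₂ : ℂ) : ℂ :=
  1 - x.1 * z₁ - x.2.1 * z₂ + x.2.2 * z₁ * z₂

/-- The tetrablock `𝔼 ⊆ ℂ³`. -/
def tetrablock : Set (ℂ × ℂ × ℂ) :=
  {x | ∀ z₁ z₂ : ℂ, ‖z₁‖ ≤ 1 → ‖z₂‖ ≤ 1 → hexDen x z₁ z₂ ≠ 0}

/-- The distinguished boundary `b𝔼` of the tetrablock. -/
def bE : Set (ℂ × ℂ × ℂ) :=
  {x | x.1 = (starRingEnd ℂ) x.2.1 * x.2.2 ∧ ‖x.2.2‖ = 1 ∧ ‖x.2.1‖ ≤ 1}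

/-- The linear fractional map `ψ_{z₁,z₂}(a, x₁, x₂, x₃)`. -/
def psi (z₁ z₂ : ℂ) (q : ℂ × ℂ × ℂ × ℂ) : ℂ :=
  q.1 * ((Real.sqrt ((1 - ‖z₁‖ ^ 2) * (1 - ‖z₂‖ ^ 2)) : ℝ) : ℂ) / hexDen q.2 z₁ z₂

/-- `sup_{z₁,z₂ ∈ 𝔻} |ψ_{z₁,z₂}(q)|`. -/
def supPsi (q : ℂ × ℂ × ℂ × ℂ) : ℝ :=
  sSup {r : ℝ | ∃ z₁ z₂ : ℂ, ‖z₁‖ < 1 ∧ ‖z₂‖ < 1 ∧ r = ‖psi z₁ z₂ q‖}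

/-- The function `K_*` on the tetrablock. -/
def Kstar (x : ℂ × ℂ × ℂ) : ℝ :=
  sSup {r : ℝ | ∃ z₁ z₂ : ℂ, ‖z₁‖ < 1 ∧ ‖z₂‖ < 1 ∧
    r = Real.sqrt ((1 - ‖z₁‖ ^ 2) * (1 - ‖z₂‖ ^ 2)) / ‖hexDen x z₁ z₂‖}

/-- The hexablock `ℍ ⊆ ℂ⁴`. -/
def hexablock : Set (ℂ × ℂ × ℂ × ℂ) :=
  {q | q.2 ∈ tetrablock ∧ supPsi q < 1}

/-- Operator norm of a `2 × 2` complex matrix acting on Euclidean `ℂ²`. -/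
def opNorm2 (A : Matrix (Fin 2) (Fin 2) ℂ) : ℝ :=
  ‖Matrix.toEuclideanCLM (𝕜 := ℂ) A‖

/-- `π(A) = (a₂₁, a₁₁, a₂₂, det A)`. -/
def piMap (A : Matrix (Fin 2) (Fin 2) ℂ) : ℂ × ℂ × ℂ × ℂ :=
  (A 1 0, A 0 0, A 1 1, A.det)

/-- The structured singular value `μ_hexa`, valued in `[0, ∞]`;
the infimum over the empty set is `∞`, whose inverse is `0`. -/
def muHexa (A : Matrix (Fin 2) (Fin 2) ℂ) : ENNReal :=
  (sInf {r : ENNReal | ∃ X : Matrix (Fin 2) (Fin 2) ℂ,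
      X 1 0 = 0 ∧ (1 - A * X).det = 0 ∧ r = ENNReal.ofReal (opNorm2 X)})⁻¹

/-- The μ-hexablock `ℍ_μ`. -/
def hexMu : Set (ℂ × ℂ × ℂ × ℂ) :=
  {q | ∃ A : Matrix (Fin 2) (Fin 2) ℂ, muHexa A < 1 ∧ piMap A = q}

/-- The normed hexablock `ℍ_N`. -/
def hexN : Set (ℂ × ℂ × ℂ × ℂ) :=
  {q | ∃ A : Matrix (Fin 2) (Fin 2) ℂ, opNorm2 A < 1 ∧ piMap A = q}

/-- `ℍ_p = π(𝒰(2))`. -/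
def hexP : Set (ℂ × ℂ × ℂ × ℂ) :=
  {q | ∃ U : Matrix (Fin 2) (Fin 2) ℂ, U ∈ Matrix.unitaryGroup (Fin 2) ℂ ∧ piMap U = q}

/-- Evaluation of a polynomial in four variables at a point of `ℂ⁴`. -/
def evalPoly4 (p : MvPolynomial (Fin 4) ℂ) (q : ℂ × ℂ × ℂ × ℂ) : ℂ :=
  MvPolynomial.eval ![q.1, q.2.1, q.2.2.1, q.2.2.2] p

/-- Polynomial convexity of a subset of `ℂ⁴`. -/
def PolyConvex (K : Set (ℂ × ℂ × ℂ × ℂ)) : Prop :=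
  ∀ z ∉ K, ∃ p : MvPolynomial (Fin 4) ℂ,
    (∀ w ∈ K, ‖evalPoly4 p w‖ ≤ 1) ∧ 1 < ‖evalPoly4 p z‖

/-- Polynomial convex hull of a subset of `ℂ⁴`. -/
def polyHull (K : Set (ℂ × ℂ × ℂ × ℂ)) : Set (ℂ × ℂ × ℂ × ℂ) :=
  {z | ∀ p : MvPolynomial (Fin 4) ℂ,
    ‖evalPoly4 p z‖ ≤ sSup {r : ℝ | ∃ w ∈ K, r = ‖evalPoly4 p w‖}}

/-- The pentablock `𝒫 ⊆ ℂ³`. -/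
def pentablock : Set (ℂ × ℂ × ℂ) :=
  {q | ∃ A : Matrix (Fin 2) (Fin 2) ℂ, opNorm2 A < 1 ∧ (A 1 0, A 0 0 + A 1 1, A.det) = q}

lemma vec2_norm_sq (v₀ v₁ : ℂ) :
    ‖(WithLp.equiv 2 (Fin 2 → ℂ)).symm ![v₀, v₁]‖ ^ 2 = ‖v₀‖^2 + ‖v₁‖^2 := by
  rw [EuclideanSpace.norm_eq, Real.sq_sqrt (by positivity)]
  simp [Fin.sum_univ_two]

lemma clm_apply (A : Matrix (Fin 2) (Fin 2) ℂ) (v₀ v₁ : ℂ) :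
    Matrix.toEuclideanCLM (𝕜 := ℂ) A ((WithLp.equiv 2 (Fin 2 → ℂ)).symm ![v₀, v₁]) =
      (WithLp.equiv 2 (Fin 2 → ℂ)).symm ![A 0 0 * v₀ + A 0 1 * v₁, A 1 0 * v₀ + A 1 1 * v₁] := by
  change WithLp.toLp 2 (Matrix.mulVec A ![v₀, v₁]) = WithLp.toLp 2 _
  congr 1
  ext i
  fin_cases i <;>
    simp [Matrix.toLin'_apply, Matrix.mulVec, dotProduct, Fin.sum_univ_two]

lemma qf_expand (x₁ b a x₂ v₀ v₁ : ℂ) :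
    ‖x₁*v₀ + b*v₁‖^2 + ‖a*v₀ + x₂*v₁‖^2 =
      (‖x₁‖^2 + ‖a‖^2)*‖v₀‖^2 + (‖b‖^2 + ‖x₂‖^2)*‖v₁‖^2 +
        2 * (((starRingEnd ℂ) x₁ * b + (starRingEnd ℂ) a * x₂) * ((starRingEnd ℂ) v₀ * v₁)).re := by
  simp only [Complex.sq_norm, Complex.normSq_apply, Complex.add_re,
    Complex.add_im, Complex.mul_re, Complex.mul_im, Complex.conj_re, Complex.conj_im]
  ring

lemma id1 (x₁ b a x₂ : ℂ) :
    (1 - ‖x₁‖^2 - ‖a‖^2) * (1 - ‖b‖^2 - ‖x₂‖^2)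
        - ‖(starRingEnd ℂ) x₁ * b + (starRingEnd ℂ) a * x₂‖^2
      = 1 - ‖x₁‖^2 - ‖x₂‖^2 - ‖a‖^2 - ‖b‖^2 + ‖x₁*x₂ - b*a‖^2 := by
  simp only [Complex.sq_norm, Complex.normSq_apply, Complex.add_re,
    Complex.add_im, Complex.sub_re, Complex.sub_im, Complex.mul_re, Complex.mul_im,
    Complex.conj_re, Complex.conj_im]
  ring

/-- Forward quadratic bound from the operator norm. -/
lemma opNorm2_qbound (A : Matrix (Fin 2) (Fin 2) ℂ) (v₀ v₁ : ℂ) :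
    ‖A 0 0 * v₀ + A 0 1 * v₁‖^2 + ‖A 1 0 * v₀ + A 1 1 * v₁‖^2
      ≤ (opNorm2 A)^2 * (‖v₀‖^2 + ‖v₁‖^2) := by
  have h := (Matrix.toEuclideanCLM (𝕜 := ℂ) A).le_opNorm
    ((WithLp.equiv 2 (Fin 2 → ℂ)).symm ![v₀, v₁])
  rw [clm_apply] at h
  have h2 := pow_le_pow_left₀ (norm_nonneg _) h 2
  rw [mul_pow, vec2_norm_sq, vec2_norm_sq] at h2
  exact h2

/-- Sufficient condition for `opNorm2 A < 1`. -/
lemma opNorm2_lt_one {x₁ b a x₂ : ℂ}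
    (hα : 0 < 1 - ‖x₁‖^2 - ‖a‖^2) (hγ : 0 < 1 - ‖b‖^2 - ‖x₂‖^2)
    (hd : ‖(starRingEnd ℂ) x₁ * b + (starRingEnd ℂ) a * x₂‖^2
        < (1 - ‖x₁‖^2 - ‖a‖^2) * (1 - ‖b‖^2 - ‖x₂‖^2)) :
    opNorm2 !![x₁, b; a, x₂] < 1 := by
  set α := 1 - ‖x₁‖^2 - ‖a‖^2 with hαdef
  set γ := 1 - ‖b‖^2 - ‖x₂‖^2 with hγdef
  set m := (starRingEnd ℂ) x₁ * b + (starRingEnd ℂ) a * x₂ with hmdef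
  set μ := ‖m‖ with hμdef
  have hαγ : 0 < α + γ := by linarith
  set ε := (α*γ - μ^2)/(α+γ) with hεdef
  have hε : 0 < ε := div_pos (by linarith) hαγ
  have hεe : ε * (α+γ) = α*γ - μ^2 := div_mul_cancel₀ _ (ne_of_gt hαγ)
  have hα1 : α ≤ 1 := by
    have := sq_nonneg ‖x₁‖; have := sq_nonneg ‖a‖; simp only [hαdef]; linarith
  have hεα : ε < α := by
    rw [hεdef, div_lt_iff₀ hαγ]
    nlinarith [sq_nonneg μ, sq_nonneg α]
  have h1ε : 0 ≤ 1 - ε := by linarith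
  -- key pointwise inequality
  have key : ∀ t u : ℝ, 0 ≤ t → 0 ≤ u →
      ε*(t^2+u^2) ≤ α*t^2 + γ*u^2 - 2*μ*t*u := by
    intro t u ht hu
    have h3 : ε*(α+γ)*(t^2+u^2) = (α*γ - μ^2)*(t^2+u^2) := by rw [hεe]
    have h2 : 0 ≤ (α+γ) * (α*t^2 + γ*u^2 - 2*μ*t*u - ε*(t^2+u^2)) := by
      nlinarith [sq_nonneg (α*t - μ*u), sq_nonneg (γ*u - μ*t), h3]
    nlinarith [h2, hαγ]
  -- operator norm bound
  have hb : opNorm2 !![x₁, b; a, x₂] ≤ Real.sqrt (1-ε) := by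
    apply ContinuousLinearMap.opNorm_le_bound _ (Real.sqrt_nonneg _)
    intro w
    have hw : w = (WithLp.equiv 2 (Fin 2 → ℂ)).symm ![w 0, w 1] := by
      ext i; fin_cases i <;> rfl
    rw [hw, clm_apply]
    simp only [Matrix.cons_val', Matrix.cons_val_zero, Matrix.cons_val_one, Matrix.head_cons,
      Matrix.empty_val', Matrix.cons_val_fin_one, Matrix.head_fin_const, Matrix.of_apply]
    set v₀ := w 0; set v₁ := w 1
    have hre : (m * ((starRingEnd ℂ) v₀ * v₁)).re ≤ μ * (‖v₀‖*‖v₁‖) := by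
      calc (m * ((starRingEnd ℂ) v₀ * v₁)).re ≤ ‖m * ((starRingEnd ℂ) v₀ * v₁)‖ :=
            Complex.re_le_norm _
        _ = μ * (‖v₀‖*‖v₁‖) := by
            rw [norm_mul, norm_mul, RCLike.norm_conj]
    have hQ : ‖x₁ * v₀ + b * v₁‖^2 + ‖a * v₀ + x₂ * v₁‖^2
        ≤ (1-ε) * (‖v₀‖^2 + ‖v₁‖^2) := by
      have hqe := qf_expand x₁ b a x₂ v₀ v₁
      have hk := key ‖v₀‖ ‖v₁‖ (norm_nonneg _) (norm_nonneg _)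
      rw [hqe]
      nlinarith [hre, hk]
    calc ‖(WithLp.equiv 2 (Fin 2 → ℂ)).symm ![x₁ * v₀ + b * v₁, a * v₀ + x₂ * v₁]‖
        = Real.sqrt (‖x₁ * v₀ + b * v₁‖^2 + ‖a * v₀ + x₂ * v₁‖^2) := by
          rw [← vec2_norm_sq, Real.sqrt_sq (norm_nonneg _)]
      _ ≤ Real.sqrt ((1-ε) * (‖v₀‖^2 + ‖v₁‖^2)) := Real.sqrt_le_sqrt hQ
      _ = Real.sqrt (1-ε) * ‖(WithLp.equiv 2 (Fin 2 → ℂ)).symm ![v₀, v₁]‖ := by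
          rw [Real.sqrt_mul h1ε, ← vec2_norm_sq v₀ v₁, Real.sqrt_sq (norm_nonneg _)]
  have : Real.sqrt (1-ε) < 1 := by
    nlinarith [Real.sq_sqrt h1ε, Real.sqrt_nonneg (1-ε)]
  linarith

lemma tetra_x1_lt {x₁ x₂ x₃ : ℂ} (hx : (x₁, x₂, x₃) ∈ tetrablock) : ‖x₁‖ < 1 := by
  by_contra h
  push_neg at h
  have hne : x₁ ≠ 0 := by intro h0; rw [h0] at h; simp at h; linarith
  have := hx (1/x₁) 0 (by rw [norm_div, norm_one]; exact div_le_one_of_le₀ h (norm_nonneg _))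
    (by norm_num)
  apply this
  field_simp [hexDen]
  simp [hexDen, hne]

lemma tetra_x2_lt {x₁ x₂ x₃ : ℂ} (hx : (x₁, x₂, x₃) ∈ tetrablock) : ‖x₂‖ < 1 := by
  by_contra h
  push_neg at h
  have hne : x₂ ≠ 0 := by intro h0; rw [h0] at h; simp at h; linarith
  have := hx 0 (1/x₂) (by norm_num)
    (by rw [norm_div, norm_one]; exact div_le_one_of_le₀ h (norm_nonneg _))
  apply this
  field_simp [hexDen]
  simp [hexDen, hne]

/-- linear fact, first variable fixed -/
lemma tetra_lin {x₁ x₂ x₃ : ℂ} (hx : (x₁, x₂, x₃) ∈ tetrablock)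
    {z : ℂ} (hz : ‖z‖ ≤ 1) : ‖x₂ - x₃ * z‖ < ‖1 - x₁ * z‖ := by
  have hd : (1 : ℂ) - x₁ * z ≠ 0 := by
    have := hx z 0 hz (by norm_num)
    simpa [hexDen] using this
  by_contra h
  push_neg at h
  have hd' : (0:ℝ) < ‖(1:ℂ) - x₁ * z‖ := norm_pos_iff.mpr hd
  have hne : x₂ - x₃ * z ≠ 0 := by
    intro h0; rw [h0, norm_zero] at h; linarith
  set w := (1 - x₁ * z) / (x₂ - x₃ * z) with hwdef
  have hwle : ‖w‖ ≤ 1 := by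
    rw [hwdef, norm_div]
    exact div_le_one_of_le₀ h (norm_nonneg _)
  apply hx z w hz hwle
  show (1:ℂ) - x₁ * z - x₂ * w + x₃ * z * w = 0
  rw [hwdef]
  rw [show (1:ℂ) - x₁ * z - x₂ * ((1 - x₁ * z) / (x₂ - x₃ * z)) + x₃ * z * ((1 - x₁ * z) / (x₂ - x₃ * z))
      = (1 - x₁ * z) - (x₂ - x₃ * z) * ((1 - x₁ * z) / (x₂ - x₃ * z)) by ring,
    mul_div_cancel₀ _ hne, sub_self]

/-- linear fact, second variable fixed -/
lemma tetra_lin' {x₁ x₂ x₃ : ℂ} (hx : (x₁, x₂, x₃) ∈ tetrablock)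
    {z : ℂ} (hz : ‖z‖ ≤ 1) : ‖x₁ - x₃ * z‖ < ‖1 - x₂ * z‖ := by
  have hd : (1 : ℂ) - x₂ * z ≠ 0 := by
    have := hx 0 z (by norm_num) hz
    simpa [hexDen] using this
  by_contra h
  push_neg at h
  have hd' : (0:ℝ) < ‖(1:ℂ) - x₂ * z‖ := norm_pos_iff.mpr hd
  have hne : x₁ - x₃ * z ≠ 0 := by
    intro h0; rw [h0, norm_zero] at h; linarith
  set w := (1 - x₂ * z) / (x₁ - x₃ * z) with hwdef
  have hwle : ‖w‖ ≤ 1 := by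
    rw [hwdef, norm_div]
    exact div_le_one_of_le₀ h (norm_nonneg _)
  apply hx w z hwle hz
  show (1:ℂ) - x₁ * w - x₂ * z + x₃ * w * z = 0
  rw [hwdef]
  rw [show (1:ℂ) - x₁ * ((1 - x₂ * z) / (x₁ - x₃ * z)) - x₂ * z + x₃ * ((1 - x₂ * z) / (x₁ - x₃ * z)) * z
      = (1 - x₂ * z) - (x₁ - x₃ * z) * ((1 - x₂ * z) / (x₁ - x₃ * z)) by ring,
    mul_div_cancel₀ _ hne, sub_self]

/-- phase alignment: `(w·z).re = ‖w‖` for some unimodular `z`. -/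
lemma exists_phase (w : ℂ) : ∃ z : ℂ, ‖z‖ = 1 ∧ (w * z).re = ‖w‖ := by
  rcases eq_or_ne w 0 with h | h
  · exact ⟨1, by norm_num, by simp [h]⟩
  · have hw0 : ‖w‖ ≠ 0 := norm_ne_zero_iff.mpr h
    refine ⟨(starRingEnd ℂ) w / ‖w‖, ?_, ?_⟩
    · rw [norm_div, RCLike.norm_conj, Complex.norm_real, Real.norm_eq_abs,
        _root_.abs_of_nonneg (norm_nonneg w), div_self hw0]
    · have e : w * ((starRingEnd ℂ) w / ‖w‖) = ((‖w‖:ℝ):ℂ) := by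
        rw [mul_div_assoc', Complex.mul_conj, Complex.normSq_eq_norm_sq]
        have e' : ‖w‖^2 / ‖w‖ = ‖w‖ := by
          rw [sq, mul_div_assoc, div_self hw0, mul_one]
        exact_mod_cast e'
      rw [e, Complex.ofReal_re]

/-- anti-alignment: `‖u - w·z‖ = ‖u‖ + ‖w‖` for some unimodular `z`. -/
lemma exists_antiphase (u w : ℂ) : ∃ z : ℂ, ‖z‖ = 1 ∧ ‖u - w * z‖ = ‖u‖ + ‖w‖ := by
  obtain ⟨z, hz1, hz2⟩ := exists_phase (-((starRingEnd ℂ) u * w))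
  refine ⟨z, hz1, ?_⟩
  have hre : (u * (starRingEnd ℂ) (w * z)).re = -(‖u‖ * ‖w‖) := by
    have e1 : (starRingEnd ℂ) (u * (starRingEnd ℂ) (w * z)) = (starRingEnd ℂ) u * (w * z) := by
      rw [map_mul, Complex.conj_conj]
    have e2 : (u * (starRingEnd ℂ) (w * z)).re = ((starRingEnd ℂ) u * (w * z)).re := by
      rw [← Complex.conj_re (u * (starRingEnd ℂ) (w * z)), e1]
    rw [e2]
    have e3 : ((starRingEnd ℂ) u * (w * z)).re = -((-((starRingEnd ℂ) u * w)) * z).re := by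
      rw [neg_mul, Complex.neg_re, neg_neg, mul_assoc]
    rw [e3, hz2, norm_neg, norm_mul, RCLike.norm_conj]
  have hsq : ‖u - w * z‖^2 = (‖u‖ + ‖w‖)^2 := by
    rw [Complex.sq_norm, Complex.normSq_sub, hre]
    have e4 : Complex.normSq (w * z) = ‖w‖^2 := by
      rw [← Complex.sq_norm, norm_mul, hz1, mul_one]
    have e5 : Complex.normSq u = ‖u‖^2 := by rw [← Complex.sq_norm]
    rw [e4, e5]
    ring
  have h1 : (0:ℝ) ≤ ‖u - w * z‖ := norm_nonneg _
  have h2 : (0:ℝ) ≤ ‖u‖ + ‖w‖ := by positivity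
  nlinarith [hsq, h1, h2]

lemma tetra_x3_lt' : True := trivial
lemma tetra_x3_lt {x₁ x₂ x₃ : ℂ} (hx : (x₁, x₂, x₃) ∈ tetrablock) : ‖x₃‖ < 1 := by
  obtain ⟨z, hz1, hz2⟩ := exists_antiphase x₂ x₃
  have h1 : ‖x₂ - x₃ * z‖ < ‖1 - x₁ * z‖ := tetra_lin hx (le_of_eq hz1)
  have h1' : ‖(1:ℂ) - x₁ * z‖ ≤ 1 + ‖x₁‖ := by
    calc ‖(1:ℂ) - x₁ * z‖ ≤ ‖(1:ℂ)‖ + ‖x₁ * z‖ := norm_sub_le _ _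
      _ = 1 + ‖x₁‖ := by rw [norm_one, norm_mul, hz1, mul_one]
  obtain ⟨z', hz1', hz2'⟩ := exists_antiphase x₁ x₃
  have h2 : ‖x₁ - x₃ * z'‖ < ‖1 - x₂ * z'‖ := tetra_lin' hx (le_of_eq hz1')
  have h2' : ‖(1:ℂ) - x₂ * z'‖ ≤ 1 + ‖x₂‖ := by
    calc ‖(1:ℂ) - x₂ * z'‖ ≤ ‖(1:ℂ)‖ + ‖x₂ * z'‖ := norm_sub_le _ _
      _ = 1 + ‖x₂‖ := by rw [norm_one, norm_mul, hz1', mul_one]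
  rw [hz2] at h1
  rw [hz2'] at h2
  linarith


lemma id2 (x₁ x₂ x₃ : ℂ) :
    ‖x₂ - (starRingEnd ℂ) x₁ * x₃‖^2 - ‖x₁*x₂ - x₃‖^2
      = (‖x₂‖^2 - ‖x₃‖^2) * (1 - ‖x₁‖^2) := by
  simp only [Complex.sq_norm, Complex.normSq_apply, Complex.sub_re,
    Complex.sub_im, Complex.mul_re, Complex.mul_im, Complex.conj_re, Complex.conj_im,
    Complex.one_re, Complex.one_im]
  ring

lemma part1 {x₁ x₂ x₃ : ℂ} (hx : (x₁, x₂, x₃) ∈ tetrablock) :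
    0 < (1 - ‖x₁‖^2 - ‖x₂‖^2 + ‖x₃‖^2)^2 - 4*‖x₁*x₂ - x₃‖^2 := by
  obtain ⟨z, hz1, hz2⟩ := exists_phase (x₂ - (starRingEnd ℂ) x₁ * x₃)
  have hlt := tetra_lin' hx (le_of_eq hz1)
  have hnz : z.re^2 + z.im^2 = 1 := by
    have : Complex.normSq z = 1 := by
      rw [← Complex.sq_norm, hz1]; norm_num
    simpa [Complex.normSq_apply, sq] using this
  have hsq : ‖x₁ - x₃*z‖^2 < ‖1 - x₂*z‖^2 := by
    nlinarith [hlt, norm_nonneg (x₁ - x₃*z), norm_nonneg ((1:ℂ) - x₂*z)]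
  have e1 : ‖x₁ - x₃*z‖^2 = ‖x₁‖^2 + ‖x₃‖^2 - 2*((starRingEnd ℂ) x₁ * x₃ * z).re := by
    simp only [Complex.sq_norm, Complex.normSq_apply, Complex.sub_re,
      Complex.sub_im, Complex.mul_re, Complex.mul_im, Complex.conj_re, Complex.conj_im]
    linear_combination (x₃.re^2 + x₃.im^2) * hnz
  have e2 : ‖(1:ℂ) - x₂*z‖^2 = 1 + ‖x₂‖^2 - 2*(x₂ * z).re := by
    simp only [Complex.sq_norm, Complex.normSq_apply, Complex.sub_re,
      Complex.sub_im, Complex.mul_re, Complex.mul_im, Complex.conj_re, Complex.conj_im,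
      Complex.one_re, Complex.one_im]
    linear_combination (x₂.re^2 + x₂.im^2) * hnz
  have hre : ((x₂ - (starRingEnd ℂ) x₁ * x₃) * z).re
      = (x₂*z).re - ((starRingEnd ℂ) x₁ * x₃ * z).re := by
    rw [sub_mul, Complex.sub_re]
  have hRv : 2 * ‖x₂ - (starRingEnd ℂ) x₁ * x₃‖ < 1 + ‖x₂‖^2 - ‖x₁‖^2 - ‖x₃‖^2 := by
    rw [← hz2, hre]
    rw [e1, e2] at hsq
    linarith
  have hid := id2 x₁ x₂ x₃
  have hv0 : 0 ≤ ‖x₂ - (starRingEnd ℂ) x₁ * x₃‖ := norm_nonneg _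
  nlinarith [hRv, hid, hv0]

lemma opNorm2_nonneg (A : Matrix (Fin 2) (Fin 2) ℂ) : 0 ≤ opNorm2 A := norm_nonneg _

/-- forward: membership in the tetrablock. -/
lemma tetra_of_opNorm {A : Matrix (Fin 2) (Fin 2) ℂ} (hA : opNorm2 A < 1) :
    (A 0 0, A 1 1, A.det) ∈ tetrablock := by
  intro z₁ z₂ hz₁ hz₂ h0
  have hdet : A.det = A 0 0 * A 1 1 - A 0 1 * A 1 0 := Matrix.det_fin_two A
  have hq := opNorm2_qbound A
  have hc0 : 0 ≤ opNorm2 A := opNorm2_nonneg A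
  have hc2 : (opNorm2 A)^2 < 1 := by nlinarith
  have hx1 : ‖A 0 0‖^2 + ‖A 1 0‖^2 ≤ (opNorm2 A)^2 := by
    have := hq 1 0; simpa using this
  have hx1lt : ‖A 0 0‖ < 1 := by
    nlinarith [norm_nonneg (A 0 0), norm_nonneg (A 1 0)]
  simp only [hexDen] at h0
  rw [hdet] at h0
  set v₀ := -(A 0 1 * z₂) with hv₀
  set v₁ := -((1:ℂ) - A 0 0 * z₁) with hv₁
  have hv1ne : v₁ ≠ 0 := by
    rw [hv₁, neg_ne_zero, sub_ne_zero]
    intro hcon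
    have : ‖A 0 0 * z₁‖ < 1 := by
      rw [norm_mul]
      calc ‖A 0 0‖ * ‖z₁‖ ≤ ‖A 0 0‖ * 1 :=
        mul_le_mul_of_nonneg_left hz₁ (norm_nonneg _)
      _ < 1 := by rw [mul_one]; exact hx1lt
    rw [← hcon] at this
    simp at this
  have k1 : A 0 0 * (z₁*v₀) + A 0 1 * (z₂*v₁) = v₀ := by
    rw [hv₀, hv₁]; ring
  have k2 : A 1 0 * (z₁*v₀) + A 1 1 * (z₂*v₁) = v₁ := by
    rw [hv₀, hv₁]
    linear_combination h0
  have hw := hq (z₁*v₀) (z₂*v₁)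
  rw [k1, k2] at hw
  have hz₁sq : ‖z₁‖^2 ≤ 1 := by nlinarith [norm_nonneg z₁]
  have hz₂sq : ‖z₂‖^2 ≤ 1 := by nlinarith [norm_nonneg z₂]
  have hn0 : ‖z₁*v₀‖^2 ≤ ‖v₀‖^2 := by
    rw [norm_mul, mul_pow]
    exact mul_le_of_le_one_left (sq_nonneg _) hz₁sq
  have hn1 : ‖z₂*v₁‖^2 ≤ ‖v₁‖^2 := by
    rw [norm_mul, mul_pow]
    exact mul_le_of_le_one_left (sq_nonneg _) hz₂sq
  have hv1pos : 0 < ‖v₁‖^2 := pow_pos (norm_pos_iff.mpr hv1ne) 2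
  nlinarith [hw, hn0, hn1, sq_nonneg ‖v₀‖]

/-- forward: positivity of `det (I - A* A)`. -/
lemma detpos_of_opNorm {A : Matrix (Fin 2) (Fin 2) ℂ} (hA : opNorm2 A < 1) :
    0 < 1 - ‖A 0 0‖^2 - ‖A 1 1‖^2 - ‖A 1 0‖^2 - ‖A 0 1‖^2
        + ‖A 0 0 * A 1 1 - A 0 1 * A 1 0‖^2 := by
  have hq := opNorm2_qbound A
  have hc0 : 0 ≤ opNorm2 A := opNorm2_nonneg A
  have hε : 0 < 1 - (opNorm2 A)^2 := by nlinarith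
  have hα : 1 - (opNorm2 A)^2 ≤ 1 - ‖A 0 0‖^2 - ‖A 1 0‖^2 := by
    have h10 : ‖A 0 0‖^2 + ‖A 1 0‖^2 ≤ (opNorm2 A)^2 := by simpa using hq 1 0
    linarith
  have hγ : 1 - (opNorm2 A)^2 ≤ 1 - ‖A 0 1‖^2 - ‖A 1 1‖^2 := by
    have h01 : ‖A 0 1‖^2 + ‖A 1 1‖^2 ≤ (opNorm2 A)^2 := by simpa using hq 0 1
    linarith
  have hγpos : 0 < 1 - ‖A 0 1‖^2 - ‖A 1 1‖^2 := lt_of_lt_of_le hε hγ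
  set γ := 1 - ‖A 0 1‖^2 - ‖A 1 1‖^2 with hγdef
  have hqv := hq ((γ:ℝ):ℂ) ((starRingEnd ℂ) ((starRingEnd ℂ) (A 0 0) * A 0 1
    + (starRingEnd ℂ) (A 1 0) * A 1 1))
  rw [qf_expand] at hqv
  set m := (starRingEnd ℂ) (A 0 0) * A 0 1 + (starRingEnd ℂ) (A 1 0) * A 1 1 with hm
  have en1 : ‖((γ:ℝ):ℂ)‖^2 = γ^2 := by
    rw [Complex.norm_real, Real.norm_eq_abs, _root_.sq_abs]
  have en2 : ‖(starRingEnd ℂ) m‖^2 = ‖m‖^2 := by rw [RCLike.norm_conj]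
  have en3 : (m * ((starRingEnd ℂ) ((γ:ℝ):ℂ) * (starRingEnd ℂ) m)).re = γ * ‖m‖^2 := by
    rw [Complex.conj_ofReal]
    rw [show m * (((γ:ℝ):ℂ) * (starRingEnd ℂ) m) = ((γ:ℝ):ℂ) * (m * (starRingEnd ℂ) m) from by
      ring]
    rw [Complex.mul_conj, ← Complex.ofReal_mul, Complex.ofReal_re,
      Complex.normSq_eq_norm_sq]
  rw [en1, en2, en3] at hqv
  have hX : 0 < (1 - ‖A 0 0‖^2 - ‖A 1 0‖^2) * γ - ‖m‖^2 := by
    nlinarith [hqv, hγpos, hε, sq_nonneg ‖m‖, mul_pos hγpos hγpos]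
  have hid := id1 (A 0 0) (A 0 1) (A 1 0) (A 1 1)
  rw [hm] at hX
  rw [hγdef] at hX
  linarith [hid, hX]

set_option maxHeartbeats 2000000 in
/-- Characterization of membership in `ℍ_N`. -/
theorem stmt9 (a x₁ x₂ x₃ : ℂ) (β δ : ℝ)
    (hβ : β = 1 - ‖x₁‖ ^ 2 - ‖x₂‖ ^ 2 + ‖x₃‖ ^ 2)
    (hδ : δ = ‖x₁ * x₂ - x₃‖) :
    ((x₁, x₂, x₃) ∈ tetrablock → 0 < β ^ 2 - 4 * δ ^ 2) ∧
    ((a, x₁, x₂, x₃) ∈ hexN ↔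
      ((x₁, x₂, x₃) ∈ tetrablock ∧
        ((a = 0 ∧ x₃ = x₁ * x₂) ∨
          (a ≠ 0 ∧ β - Real.sqrt (β ^ 2 - 4 * δ ^ 2) < 2 * ‖a‖ ^ 2 ∧
            2 * ‖a‖ ^ 2 < β + Real.sqrt (β ^ 2 - 4 * δ ^ 2))))) := by
  subst hβ
  subst hδ
  have hforward : (x₁, x₂, x₃) ∈ tetrablock →
      0 < (1 - ‖x₁‖^2 - ‖x₂‖^2 + ‖x₃‖^2) ^ 2 - 4 * ‖x₁ * x₂ - x₃‖ ^ 2 := fun hx => part1 hx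
  refine ⟨by simpa using hforward, ?_, ?_⟩
  · -- forward direction
    rintro ⟨A, hA, hπ⟩
    simp only [piMap, Prod.mk.injEq] at hπ
    obtain ⟨ha, hx1, hx2, hx3⟩ := hπ
    have hdet : A.det = A 0 0 * A 1 1 - A 0 1 * A 1 0 := Matrix.det_fin_two A
    have htetra : (x₁, x₂, x₃) ∈ tetrablock := by
      rw [← hx1, ← hx2, ← hx3]; exact tetra_of_opNorm hA
    refine ⟨htetra, ?_⟩
    have hpos := detpos_of_opNorm hA
    rw [← hdet, hx3, hx1, hx2, ha] at hpos
    rcases eq_or_ne a 0 with ha0 | hane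
    · left
      refine ⟨ha0, ?_⟩
      have hA10 : A 1 0 = 0 := by rw [ha, ha0]
      rw [← hx3, hdet, hA10, mul_zero, sub_zero, hx1, hx2]
    · right
      refine ⟨hane, ?_, ?_⟩ <;>
      · have hδeq : ‖x₁*x₂ - x₃‖^2 = ‖A 0 1‖^2 * ‖a‖^2 := by
          rw [← hx1, ← hx2, ← hx3, hdet, ← ha,
            show A 0 0 * A 1 1 - (A 0 0 * A 1 1 - A 0 1 * A 1 0) = A 0 1 * A 1 0 from by ring,
            norm_mul, mul_pow]
        have hD := part1 htetra
        have hsq := Real.sq_sqrt hD.le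
        have hs0 := Real.sqrt_nonneg
          ((1 - ‖x₁‖^2 - ‖x₂‖^2 + ‖x₃‖^2) ^ 2 - 4 * ‖x₁ * x₂ - x₃‖ ^ 2)
        have hapos : 0 < ‖a‖^2 := pow_pos (norm_pos_iff.mpr hane) 2
        have hkey : (2*‖a‖^2 - (1 - ‖x₁‖^2 - ‖x₂‖^2 + ‖x₃‖^2))^2
            < (1 - ‖x₁‖^2 - ‖x₂‖^2 + ‖x₃‖^2) ^ 2 - 4 * ‖x₁ * x₂ - x₃‖ ^ 2 := by
          nlinarith [mul_pos hapos hpos, hδeq]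
        nlinarith [hkey, hsq, hs0]
  · -- backward direction
    rintro ⟨htetra, hcase⟩
    have hx1lt := tetra_x1_lt htetra
    have hx2lt := tetra_x2_lt htetra
    have hx1sq : ‖x₁‖^2 < 1 := by nlinarith [norm_nonneg x₁]
    have hx2sq : ‖x₂‖^2 < 1 := by nlinarith [norm_nonneg x₂]
    rcases hcase with ⟨ha0, hx3⟩ | ⟨hane, h1, h2⟩
    · refine ⟨!![x₁, 0; 0, x₂], ?_, ?_⟩
      · refine opNorm2_lt_one (by rw [norm_zero]; nlinarith [hx1sq])
          (by rw [norm_zero]; nlinarith [hx2sq]) ?_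
        simp only [mul_zero, map_zero, zero_mul, add_zero, zero_add, norm_zero]
        nlinarith [hx1sq, hx2sq]
      · have e : piMap !![x₁, (0:ℂ); 0, x₂] = ((0:ℂ), x₁, x₂, x₁*x₂) := by
          simp [piMap, Matrix.det_fin_two]
        rw [e, ← ha0, ← hx3]
    · set b := (x₁*x₂ - x₃)/a with hb
      have hba : b*a = x₁*x₂ - x₃ := div_mul_cancel₀ _ hane
      have hnb : ‖b‖^2*‖a‖^2 = ‖x₁*x₂ - x₃‖^2 := by rw [← mul_pow, ← norm_mul, hba]
      have hD := part1 htetra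
      have hsq := Real.sq_sqrt hD.le
      have hkey : (2*‖a‖^2 - (1 - ‖x₁‖^2 - ‖x₂‖^2 + ‖x₃‖^2))^2
          < (1 - ‖x₁‖^2 - ‖x₂‖^2 + ‖x₃‖^2) ^ 2 - 4 * ‖x₁ * x₂ - x₃‖ ^ 2 := by
        have h3 : (2*‖a‖^2 - (1 - ‖x₁‖^2 - ‖x₂‖^2 + ‖x₃‖^2))^2
            < (Real.sqrt ((1 - ‖x₁‖^2 - ‖x₂‖^2 + ‖x₃‖^2) ^ 2 - 4 * ‖x₁ * x₂ - x₃‖ ^ 2))^2 :=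
          sq_lt_sq' (by linarith) (by linarith)
        rw [hsq] at h3
        exact h3
      have hapos : 0 < ‖a‖^2 := pow_pos (norm_pos_iff.mpr hane) 2
      have hpos' : 0 < (1 - ‖x₁‖^2 - ‖x₂‖^2 + ‖x₃‖^2) - ‖a‖^2 - ‖b‖^2 := by
        nlinarith [hkey, hnb, hapos]
      have hx3lt := tetra_x3_lt htetra
      have hx3sq : ‖x₃‖^2 < 1 := by nlinarith [norm_nonneg x₃]
      have hid := id1 x₁ b a x₂
      have hbax : x₁*x₂ - b*a = x₃ := by rw [hba]; ring
      rw [hbax] at hid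
      have hprod : ‖(starRingEnd ℂ) x₁ * b + (starRingEnd ℂ) a * x₂‖^2
          < (1 - ‖x₁‖^2 - ‖a‖^2) * (1 - ‖b‖^2 - ‖x₂‖^2) := by linarith
      have hαpos : 0 < 1 - ‖x₁‖^2 - ‖a‖^2 := by
        rcases le_or_gt (1 - ‖x₁‖^2 - ‖a‖^2) 0 with hle | hlt
        · exfalso
          have hγ' : 0 < 1 - ‖b‖^2 - ‖x₂‖^2 := by linarith
          have : (1 - ‖x₁‖^2 - ‖a‖^2) * (1 - ‖b‖^2 - ‖x₂‖^2) ≤ 0 :=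
            mul_nonpos_of_nonpos_of_nonneg hle hγ'.le
          nlinarith [hprod, sq_nonneg ‖(starRingEnd ℂ) x₁ * b + (starRingEnd ℂ) a * x₂‖]
        · exact hlt
      have hγpos : 0 < 1 - ‖b‖^2 - ‖x₂‖^2 := by
        by_contra h'
        push_neg at h'
        have : (1 - ‖x₁‖^2 - ‖a‖^2) * (1 - ‖b‖^2 - ‖x₂‖^2) ≤ 0 :=
          mul_nonpos_of_nonneg_of_nonpos hαpos.le h'
        nlinarith [hprod, sq_nonneg ‖(starRingEnd ℂ) x₁ * b + (starRingEnd ℂ) a * x₂‖]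
      refine ⟨!![x₁, b; a, x₂], opNorm2_lt_one hαpos hγpos hprod, ?_⟩
      have e : piMap !![x₁, b; a, x₂] = (a, x₁, x₂, x₁*x₂ - b*a) := by
        simp [piMap, Matrix.det_fin_two]
      rw [e, hbax]
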